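/- Let f, g ∈ ℂ[x] with leading coefficients c and γ respectively, and suppose g divides f. Then |g|_1 ≤ 2^{deg g} · |γ/c| · |f|_2, where |·|_1 is the sum of absolute values of coefficients and |·|_2 is the Euclidean norm of the coefficient vector. -/

import Mathlib

open Polynomial Finset Complex


noncomputable def L2 (p : ℂ[X]) : ℝ := ∑ k ∈ range (p.natDegree + 1), ‖p.coeff k‖^2
noncomputable def L1 (p : ℂ[X]) : ℝ := ∑ k ∈ range (p.natDegree + 1), ‖p.coeff k‖

lemma L2_eq (p : ℂ[X]) (N : ℕ) (h : p.natDegree < N) :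
    L2 p = ∑ k ∈ range N, ‖p.coeff k‖^2 := by
  refine Finset.sum_subset (by simp; omega) fun k _ hk => ?_
  simp at hk
  rw [p.coeff_eq_zero_of_natDegree_lt (by omega), norm_zero]
  ring

lemma L2_nonneg (p : ℂ[X]) : 0 ≤ L2 p :=
  Finset.sum_nonneg fun _ _ => sq_nonneg _

lemma leadingCoeff_sq_le_L2 (p : ℂ[X]) : ‖p.leadingCoeff‖^2 ≤ L2 p := by
  exact Finset.single_le_sum (f := fun k => ‖p.coeff k‖^2)
    (fun _ _ => sq_nonneg _) (by simp)

lemma swap_L2 (a : ℂ) (q : ℂ[X]) :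
    L2 ((X - C a) * q) = L2 ((C (starRingEnd ℂ a) * X - 1) * q) := by
  set n := q.natDegree with hn
  have h1 : ((X - C a) * q).natDegree < n + 2 := by
    calc ((X - C a) * q).natDegree ≤ (X - C a).natDegree + q.natDegree := natDegree_mul_le
    _ < n + 2 := by rw [natDegree_X_sub_C]; omega
  have h2 : ((C (starRingEnd ℂ a) * X - 1) * q).natDegree < n + 2 := by
    calc ((C (starRingEnd ℂ a) * X - 1) * q).natDegree
        ≤ (C (starRingEnd ℂ a) * X - 1).natDegree + q.natDegree := natDegree_mul_le
    _ < n + 2 := by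
        have : (C (starRingEnd ℂ a) * X - 1).natDegree ≤ 1 := by
          have := natDegree_linear_le (a := starRingEnd ℂ a) (b := (-1 : ℂ))
          simpa [sub_eq_add_neg] using this
        omega
  rw [L2_eq _ (n+2) h1, L2_eq _ (n+2) h2]
  have hc1 : ∀ k, ((X - C a) * q).coeff (k+1) = q.coeff k - a * q.coeff (k+1) := by
    intro k; rw [sub_mul, coeff_sub, coeff_X_mul, coeff_C_mul]
  have hc1z : ((X - C a) * q).coeff 0 = -(a * q.coeff 0) := by
    rw [sub_mul, coeff_sub, mul_coeff_zero, coeff_C_mul]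
    simp
  have hc2 : ∀ k, ((C (starRingEnd ℂ a) * X - 1) * q).coeff (k+1)
      = (starRingEnd ℂ a) * q.coeff k - q.coeff (k+1) := by
    intro k; rw [sub_mul, one_mul, coeff_sub, mul_assoc, coeff_C_mul, coeff_X_mul]
  have hc2z : ((C (starRingEnd ℂ a) * X - 1) * q).coeff 0 = -(q.coeff 0) := by
    rw [sub_mul, one_mul, coeff_sub, mul_assoc, mul_coeff_zero]
    simp
  have e1 : ∑ k ∈ range (n+2), ‖((X - C a) * q).coeff k‖^2
      = ∑ k ∈ range (n+1), ‖q.coeff k - a * q.coeff (k+1)‖^2 + ‖a‖^2 * ‖q.coeff 0‖^2 := by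
    rw [Finset.sum_range_succ']
    simp only [hc1, hc1z, norm_neg, norm_mul, mul_pow]
  have e2 : ∑ k ∈ range (n+2), ‖((C (starRingEnd ℂ a) * X - 1) * q).coeff k‖^2
      = ∑ k ∈ range (n+1), ‖(starRingEnd ℂ a) * q.coeff k - q.coeff (k+1)‖^2 + ‖q.coeff 0‖^2 := by
    rw [Finset.sum_range_succ']
    simp only [hc2, hc2z, norm_neg]
  rw [e1, e2]
  have key : ∀ k, ‖q.coeff k - a * q.coeff (k+1)‖^2 - ‖(starRingEnd ℂ a) * q.coeff k - q.coeff (k+1)‖^2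
      = (1 - ‖a‖^2) * (‖q.coeff k‖^2 - ‖q.coeff (k+1)‖^2) := by
    intro k
    have hcross : q.coeff k * (starRingEnd ℂ) (a * q.coeff (k+1))
        = ((starRingEnd ℂ a) * q.coeff k) * (starRingEnd ℂ) (q.coeff (k+1)) := by
      rw [map_mul]; ring
    simp only [Complex.sq_norm, Complex.normSq_sub, Complex.normSq_mul,
      Complex.normSq_conj, hcross]
    ring
  have tele : ∑ k ∈ range (n+1), (‖q.coeff k‖^2 - ‖q.coeff (k+1)‖^2)
      = ‖q.coeff 0‖^2 - ‖q.coeff (n+1)‖^2 := Finset.sum_range_sub' _ _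
  have hqn : q.coeff (n+1) = 0 := q.coeff_natDegree_succ_eq_zero
  have expand : ∑ k ∈ range (n+1), ‖q.coeff k - a * q.coeff (k+1)‖^2
      - ∑ k ∈ range (n+1), ‖(starRingEnd ℂ a) * q.coeff k - q.coeff (k+1)‖^2
      = (1 - ‖a‖^2) * ‖q.coeff 0‖^2 := by
    rw [← Finset.sum_sub_distrib]
    simp only [key]
    rw [← Finset.mul_sum, tele, hqn]
    simp
  linarith [expand]



lemma L1_mul_X_sub_C (a : ℂ) (q : ℂ[X]) : L1 ((X - C a) * q) ≤ (1 + ‖a‖) * L1 q := by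
  rcases eq_or_ne q 0 with rfl | hq
  · simp [L1]
  set n := q.natDegree with hn
  have hdeg : ((X - C a) * q).natDegree = n + 1 := by
    rw [natDegree_mul (X_sub_C_ne_zero a) hq, natDegree_X_sub_C]; omega
  have hc1 : ∀ k, ((X - C a) * q).coeff (k+1) = q.coeff k - a * q.coeff (k+1) := by
    intro k; rw [sub_mul, coeff_sub, coeff_X_mul, coeff_C_mul]
  have hc1z : ((X - C a) * q).coeff 0 = -(a * q.coeff 0) := by
    rw [sub_mul, coeff_sub, mul_coeff_zero, coeff_C_mul]; simp
  have e1 : L1 ((X - C a) * q)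
      = ∑ k ∈ range (n+1), ‖q.coeff k - a * q.coeff (k+1)‖ + ‖a‖ * ‖q.coeff 0‖ := by
    rw [L1, hdeg, Finset.sum_range_succ']
    simp only [hc1, hc1z, norm_neg, norm_mul]
  have shift : ∑ k ∈ range (n+1), ‖q.coeff (k+1)‖ = L1 q - ‖q.coeff 0‖ := by
    have h2 : ∑ k ∈ range (n+2), ‖q.coeff k‖
        = ∑ k ∈ range (n+1), ‖q.coeff (k+1)‖ + ‖q.coeff 0‖ := Finset.sum_range_succ' _ _
    have h3 : ∑ k ∈ range (n+2), ‖q.coeff k‖ = L1 q := by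
      rw [Finset.sum_range_succ, L1, q.coeff_natDegree_succ_eq_zero]
      simp
      rfl
    linarith
  have tri : ∑ k ∈ range (n+1), ‖q.coeff k - a * q.coeff (k+1)‖
      ≤ ∑ k ∈ range (n+1), (‖q.coeff k‖ + ‖a‖ * ‖q.coeff (k+1)‖) := by
    refine Finset.sum_le_sum fun k _ => ?_
    calc ‖q.coeff k - a * q.coeff (k+1)‖ ≤ ‖q.coeff k‖ + ‖a * q.coeff (k+1)‖ := norm_sub_le _ _
    _ = ‖q.coeff k‖ + ‖a‖ * ‖q.coeff (k+1)‖ := by rw [norm_mul]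
  rw [Finset.sum_add_distrib, ← Finset.mul_sum, shift] at tri
  have h0 : 0 ≤ ‖q.coeff 0‖ := norm_nonneg _
  have : ∑ k ∈ range (n+1), ‖q.coeff k‖ = L1 q := rfl
  rw [e1]
  nlinarith [norm_nonneg a]

noncomputable def fct (a : ℂ) : ℂ[X] :=
  if 1 < ‖a‖ then C (starRingEnd ℂ a) * X - 1 else X - C a

lemma lead_fct (a : ℂ) : ‖(fct a).leadingCoeff‖ = max 1 ‖a‖ := by
  unfold fct
  split_ifs with h
  · have ha : (starRingEnd ℂ) a ≠ 0 := by
      intro h0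
      have : a = 0 := by
        simpa using congrArg (starRingEnd ℂ) h0
      subst this; simp at h; linarith
    have : C ((starRingEnd ℂ) a) * X - 1 = C ((starRingEnd ℂ) a) * X + C (-1 : ℂ) := by
      simp [sub_eq_add_neg]
    rw [this, leadingCoeff_linear ha]
    rw [Complex.norm_conj]
    exact (max_eq_right h.le).symm
  · rw [(monic_X_sub_C a).leadingCoeff, norm_one]
    exact (max_eq_left (not_lt.mp h)).symm

lemma L2_Q (s : Multiset ℂ) : ∀ r : ℂ[X],
    L2 ((s.map fct).prod * r) = L2 ((s.map (fun a => X - C a)).prod * r) := by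
  induction s using Multiset.induction with
  | empty => intro r; simp
  | cons a s ih =>
    intro r
    simp only [Multiset.map_cons, Multiset.prod_cons]
    have h1 : fct a * (s.map fct).prod * r = (s.map fct).prod * (fct a * r) := by ring
    have h2 : (s.map fct).prod * (fct a * r)
        = (s.map fct).prod * (fct a * r) := rfl
    rw [h1, ih (fct a * r)]
    have h3 : (s.map (fun a => X - C a)).prod * (fct a * r)
        = fct a * ((s.map (fun a => X - C a)).prod * r) := by ring
    have h4 : (X - C a) * (s.map (fun a => X - C a)).prod * r
        = (X - C a) * ((s.map (fun a => X - C a)).prod * r) := by ring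
    rw [h3, h4]
    unfold fct
    split_ifs with h
    · exact (swap_L2 a _).symm
    · rfl

lemma L1_P (s : Multiset ℂ) (c : ℂ) :
    L1 ((s.map (fun a => X - C a)).prod * C c)
      ≤ (s.map (fun a => 1 + ‖a‖)).prod * ‖c‖ := by
  induction s using Multiset.induction with
  | empty => simp [L1]
  | cons a s ih =>
    simp only [Multiset.map_cons, Multiset.prod_cons]
    have h1 : (X - C a) * (s.map (fun a => X - C a)).prod * C c
        = (X - C a) * ((s.map (fun a => X - C a)).prod * C c) := by ring
    rw [h1]
    calc L1 ((X - C a) * ((s.map (fun a => X - C a)).prod * C c))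
        ≤ (1 + ‖a‖) * L1 ((s.map (fun a => X - C a)).prod * C c) := L1_mul_X_sub_C _ _
    _ ≤ (1 + ‖a‖) * ((s.map (fun a => 1 + ‖a‖)).prod * ‖c‖) := by
        refine mul_le_mul_of_nonneg_left ih (by positivity)
    _ = (1 + ‖a‖) * (s.map (fun a => 1 + ‖a‖)).prod * ‖c‖ := by ring

lemma prod_one_add_le (s : Multiset ℂ) :
    (s.map (fun a => 1 + ‖a‖)).prod ≤ 2 ^ Multiset.card s * (s.map (fun a => max 1 ‖a‖)).prod := by
  induction s using Multiset.induction with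
  | empty => simp
  | cons a s ih =>
    simp only [Multiset.map_cons, Multiset.prod_cons, Multiset.card_cons]
    have h1 : (1 : ℝ) + ‖a‖ ≤ 2 * max 1 ‖a‖ := by
      rcases le_total ‖a‖ 1 with h | h
      · rw [max_eq_left h]; linarith
      · rw [max_eq_right h]; linarith
    have hp1 : (0:ℝ) ≤ (s.map (fun a => 1 + ‖a‖)).prod :=
      Multiset.prod_nonneg (by intro x hx; simp at hx; obtain ⟨b,_,rfl⟩ := hx; positivity)
    have hp2 : (0:ℝ) ≤ (s.map (fun a => max 1 ‖a‖)).prod :=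
      Multiset.prod_nonneg (by intro x hx; simp at hx; obtain ⟨b,_,rfl⟩ := hx; positivity)
    calc (1 + ‖a‖) * (s.map (fun a => 1 + ‖a‖)).prod
        ≤ (2 * max 1 ‖a‖) * (2 ^ Multiset.card s * (s.map (fun a => max 1 ‖a‖)).prod) := by
          refine mul_le_mul h1 ih hp1 (by positivity)
    _ = 2 ^ (Multiset.card s + 1) * (max 1 ‖a‖ * (s.map (fun a => max 1 ‖a‖)).prod) := by ring

lemma lead_sq_le_L2 (p : ℂ[X]) : ‖p.leadingCoeff‖^2 ≤ L2 p :=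
  Finset.single_le_sum (f := fun k => ‖p.coeff k‖^2) (fun _ _ => sq_nonneg _) (by simp)

lemma norm_mprod (t : Multiset ℂ) : ‖t.prod‖ = (t.map (fun z => ‖z‖)).prod := by
  induction t using Multiset.induction with
  | empty => simp
  | cons a t ih => simp [norm_mul, ih]

lemma landau (p : ℂ[X]) (hp : p ≠ 0) :
    ‖p.leadingCoeff‖ * (p.roots.map (fun a => max 1 ‖a‖)).prod ≤ Real.sqrt (L2 p) := by
  set s := p.roots with hs
  have hcard : Multiset.card s = p.natDegree :=
    (splits_iff_card_roots).mp (IsAlgClosed.splits p)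
  have hp_eq : (s.map (fun a => X - C a)).prod * C p.leadingCoeff = p := by
    rw [mul_comm]
    exact C_leadingCoeff_mul_prod_multiset_X_sub_C hcard
  set h := (s.map fct).prod * C p.leadingCoeff with hh
  have hL2 : L2 h = L2 p := by rw [hh, L2_Q s (C p.leadingCoeff), hp_eq]
  have hlead : ‖h.leadingCoeff‖ = ‖p.leadingCoeff‖ * (s.map (fun a => max 1 ‖a‖)).prod := by
    rw [hh, leadingCoeff_mul, leadingCoeff_C, norm_mul, mul_comm]
    congr 1
    rw [leadingCoeff_multiset_prod, Multiset.map_map, norm_mprod, Multiset.map_map]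
    congr 1
    exact Multiset.map_congr rfl fun a _ => lead_fct a
  rw [← hlead, ← hL2]
  refine Real.le_sqrt_of_sq_le ?_
  exact lead_sq_le_L2 h

theorem stmt11 (f g : Polynomial ℂ) (hf : f ≠ 0) (hdvd : g ∣ f) :
    (∑ i ∈ Finset.range (g.natDegree + 1), ‖g.coeff i‖) ≤
      2 ^ g.natDegree * ‖g.leadingCoeff / f.leadingCoeff‖ *
        Real.sqrt (∑ i ∈ Finset.range (f.natDegree + 1), ‖f.coeff i‖ ^ 2) := by
  have hg : g ≠ 0 := by rintro rfl; exact hf (zero_dvd_iff.mp hdvd)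
  have hc : f.leadingCoeff ≠ 0 := leadingCoeff_ne_zero.mpr hf
  have hγ : g.leadingCoeff ≠ 0 := leadingCoeff_ne_zero.mpr hg
  have hcardg : Multiset.card g.roots = g.natDegree :=
    (splits_iff_card_roots).mp (IsAlgClosed.splits g)
  have hg_eq : (g.roots.map (fun a => X - C a)).prod * C g.leadingCoeff = g := by
    rw [mul_comm]; exact C_leadingCoeff_mul_prod_multiset_X_sub_C hcardg
  have step1 : L1 g ≤ 2 ^ g.natDegree * ‖g.leadingCoeff‖
      * (g.roots.map (fun a => max 1 ‖a‖)).prod := by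
    calc L1 g = L1 ((g.roots.map (fun a => X - C a)).prod * C g.leadingCoeff) := by rw [hg_eq]
    _ ≤ (g.roots.map (fun a => 1 + ‖a‖)).prod * ‖g.leadingCoeff‖ := L1_P _ _
    _ ≤ (2 ^ Multiset.card g.roots * (g.roots.map (fun a => max 1 ‖a‖)).prod) * ‖g.leadingCoeff‖ := by
        exact mul_le_mul_of_nonneg_right (prod_one_add_le _) (norm_nonneg _)
    _ = 2 ^ g.natDegree * ‖g.leadingCoeff‖ * (g.roots.map (fun a => max 1 ‖a‖)).prod := by
        rw [hcardg]; ring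
  have hroots_le : g.roots ≤ f.roots := roots.le_of_dvd hf hdvd
  have step2 : (g.roots.map (fun a => max 1 ‖a‖)).prod
      ≤ (f.roots.map (fun a => max 1 ‖a‖)).prod := by
    obtain ⟨u, hu⟩ := Multiset.le_iff_exists_add.mp hroots_le
    rw [hu, Multiset.map_add, Multiset.prod_add]
    have h1 : (1:ℝ) ≤ (u.map (fun a => max 1 ‖a‖)).prod := by
      refine Multiset.one_le_prod ?_
      intro x hx; simp at hx; obtain ⟨b, _, rfl⟩ := hx; exact le_max_left _ _
    have h0 : (0:ℝ) ≤ (g.roots.map (fun a => max 1 ‖a‖)).prod := by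
      refine Multiset.prod_nonneg ?_
      intro x hx; simp at hx; obtain ⟨b, _, rfl⟩ := hx; positivity
    exact le_mul_of_one_le_right h0 h1
  have step3 : ‖f.leadingCoeff‖ * (f.roots.map (fun a => max 1 ‖a‖)).prod
      ≤ Real.sqrt (L2 f) := landau f hf
  have hnorm : ‖g.leadingCoeff / f.leadingCoeff‖ * ‖f.leadingCoeff‖ = ‖g.leadingCoeff‖ := by
    rw [norm_div, div_mul_cancel₀]
    exact norm_ne_zero_iff.mpr hc
  have key : L1 g ≤ 2 ^ g.natDegree * ‖g.leadingCoeff / f.leadingCoeff‖ * Real.sqrt (L2 f) := by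
    calc L1 g ≤ 2 ^ g.natDegree * ‖g.leadingCoeff‖ * (g.roots.map (fun a => max 1 ‖a‖)).prod :=
      step1
    _ ≤ 2 ^ g.natDegree * ‖g.leadingCoeff‖ * (f.roots.map (fun a => max 1 ‖a‖)).prod := by
        refine mul_le_mul_of_nonneg_left step2 (by positivity)
    _ = 2 ^ g.natDegree * ‖g.leadingCoeff / f.leadingCoeff‖
        * (‖f.leadingCoeff‖ * (f.roots.map (fun a => max 1 ‖a‖)).prod) := by
        rw [← hnorm]; ring
    _ ≤ 2 ^ g.natDegree * ‖g.leadingCoeff / f.leadingCoeff‖ * Real.sqrt (L2 f) := by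
        refine mul_le_mul_of_nonneg_left step3 (by positivity)
  exact key
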